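/- Let Ω ⊆ ℝ^n be a convex set, let f : ℝ^n → ℝ^g be differentiable on Ω (with Fréchet derivative Df(x) : ℝ^n → ℝ^g at each x ∈ Ω), and let G : ℝ^g → ℝ^n be a linear map. Suppose γ̲, γ̄ ∈ ℝ are such that for every x ∈ Ω and every v ∈ ℝ^n: γ̲·‖v‖² ≤ ⟨G(Df(x)(v)), v⟩ ≤ γ̄·‖v‖² (this is exactly the condition that the minimum and maximum eigenvalues of the symmetrized matrix (1/2)(Ξ(x) + Ξ(x)ᵀ), where Ξ(x) is the matrix of G∘Df(x), lie in [γ̲, γ̄]). Then for all x, x̂ ∈ Ω: γ̲·‖x − x̂‖² ≤ ⟨G(f(x) − f(x̂)), x − x̂⟩ ≤ γ̄·‖x − x̂‖². -/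

import Mathlib

open RealInnerProductSpace

lemma osl_upper_aux
    (n g : ℕ)
    (Ω : Set (EuclideanSpace ℝ (Fin n))) (hΩ : Convex ℝ Ω)
    (f : EuclideanSpace ℝ (Fin n) → EuclideanSpace ℝ (Fin g))
    (Df : EuclideanSpace ℝ (Fin n) → (EuclideanSpace ℝ (Fin n) →L[ℝ] EuclideanSpace ℝ (Fin g)))
    (hdf : ∀ x ∈ Ω, HasFDerivWithinAt f (Df x) Ω x)
    (G : EuclideanSpace ℝ (Fin g) →ₗ[ℝ] EuclideanSpace ℝ (Fin n))
    (γ : ℝ)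
    (hb : ∀ x ∈ Ω, ∀ v : EuclideanSpace ℝ (Fin n), ⟪G (Df x v), v⟫ ≤ γ * ‖v‖ ^ 2)
    (x : EuclideanSpace ℝ (Fin n)) (hx : x ∈ Ω) (y : EuclideanSpace ℝ (Fin n)) (hy : y ∈ Ω) :
    ⟪G (f x - f y), x - y⟫ ≤ γ * ‖x - y‖ ^ 2 := by
  set v := x - y with hv
  set C := γ * ‖v‖ ^ 2 with hC
  set c : ℝ → EuclideanSpace ℝ (Fin n) := fun t => y + t • v with hcdef
  have hmaps : Set.MapsTo c (Set.Icc (0:ℝ) 1) Ω := by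
    intro t ht
    have := hΩ.add_smul_sub_mem hy hx ht
    simpa [hcdef, hv] using this
  set L : EuclideanSpace ℝ (Fin g) →L[ℝ] ℝ :=
    (innerSL ℝ v).comp (LinearMap.toContinuousLinearMap G) with hL
  set ψ : ℝ → ℝ := fun t => L (f (c t)) - t * C with hψ
  have hderiv : ∀ t ∈ Set.Icc (0:ℝ) 1,
      HasDerivWithinAt ψ (L (Df (c t) v) - C) (Set.Icc (0:ℝ) 1) t := by
    intro t ht
    have hc : HasDerivWithinAt c v (Set.Icc (0:ℝ) 1) t := by
      have : HasDerivAt (fun t : ℝ => y + t • v) ((1:ℝ) • v) t :=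
        ((hasDerivAt_id t).smul_const v).const_add y
      rw [one_smul] at this
      exact this.hasDerivWithinAt
    have hfc : HasDerivWithinAt (fun t => f (c t)) (Df (c t) v) (Set.Icc (0:ℝ) 1) t :=
      (hdf _ (hmaps ht)).comp_hasDerivWithinAt t hc hmaps
    have hLfc : HasDerivWithinAt (fun t => L (f (c t))) (L (Df (c t) v)) (Set.Icc (0:ℝ) 1) t :=
      L.hasFDerivAt.comp_hasDerivWithinAt t hfc
    have h2 := ((hasDerivAt_id t).mul_const C).hasDerivWithinAt (s := Set.Icc (0:ℝ) 1)
    rw [one_mul] at h2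
    exact hLfc.sub h2
  have hanti : AntitoneOn ψ (Set.Icc (0:ℝ) 1) := by
    apply antitoneOn_of_hasDerivWithinAt_nonpos (convex_Icc 0 1)
      (fun t ht => (hderiv t ht).continuousWithinAt)
      (fun t ht => ((hderiv t (interior_subset ht)).mono interior_subset))
    intro t ht
    have := hb _ (hmaps (interior_subset ht)) v
    have hLe : L (Df (c t) v) = ⟪G (Df (c t) v), v⟫ :=
      show ⟪v, G (Df (c t) v)⟫ = ⟪G (Df (c t) v), v⟫ from real_inner_comm _ _
    rw [hLe]
    linarith
  have h01 : ψ 1 ≤ ψ 0 := hanti (Set.mem_Icc.2 ⟨le_refl 0, zero_le_one⟩)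
      (Set.mem_Icc.2 ⟨zero_le_one, le_refl 1⟩) zero_le_one
  have hc1 : c 1 = x := by simp [hcdef, hv]
  have hc0 : c 0 = y := by simp [hcdef]
  have hL1 : ∀ w, L w = ⟪G w, v⟫ := fun w =>
    show ⟪v, G w⟫ = ⟪G w, v⟫ from real_inner_comm _ _
  have : ⟪G (f x), v⟫ - C ≤ ⟪G (f y), v⟫ := by
    have := h01
    simpa [hψ, hc1, hc0, hL1] using this
  have hsub : ⟪G (f x - f y), v⟫ = ⟪G (f x), v⟫ - ⟪G (f y), v⟫ := by
    rw [map_sub, inner_sub_left]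
  rw [hv] at *
  linarith [this, hsub.ge]

/-- If `Ω ⊆ ℝ^n` is convex, `f : ℝ^n → ℝ^g` is differentiable on `Ω` with derivative
`Df x` at each `x ∈ Ω`, `G : ℝ^g → ℝ^n` is linear, and
`γ̲·‖v‖² ≤ ⟪G (Df x v), v⟫ ≤ γ̄·‖v‖²` for all `x ∈ Ω` and `v ∈ ℝ^n`, then
`γ̲·‖x − y‖² ≤ ⟪G (f x − f y), x − y⟫ ≤ γ̄·‖x − y‖²` for all `x, y ∈ Ω`. -/
theorem osl_bounds_from_jacobian
    (n g : ℕ)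
    (Ω : Set (EuclideanSpace ℝ (Fin n))) (hΩ : Convex ℝ Ω)
    (f : EuclideanSpace ℝ (Fin n) → EuclideanSpace ℝ (Fin g))
    (Df : EuclideanSpace ℝ (Fin n) → (EuclideanSpace ℝ (Fin n) →L[ℝ] EuclideanSpace ℝ (Fin g)))
    (hdf : ∀ x ∈ Ω, HasFDerivWithinAt f (Df x) Ω x)
    (G : EuclideanSpace ℝ (Fin g) →ₗ[ℝ] EuclideanSpace ℝ (Fin n))
    (γlo γhi : ℝ)
    (hbound : ∀ x ∈ Ω, ∀ v : EuclideanSpace ℝ (Fin n),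
      γlo * ‖v‖ ^ 2 ≤ ⟪G (Df x v), v⟫ ∧ ⟪G (Df x v), v⟫ ≤ γhi * ‖v‖ ^ 2) :
    ∀ x ∈ Ω, ∀ y ∈ Ω,
      γlo * ‖x - y‖ ^ 2 ≤ ⟪G (f x - f y), x - y⟫ ∧
      ⟪G (f x - f y), x - y⟫ ≤ γhi * ‖x - y‖ ^ 2 := by
  intro x hx y hy
  constructor
  · have := osl_upper_aux n g Ω hΩ f Df hdf (-G) (-γlo)
      (fun z hz v => by
        have := (hbound z hz v).1
        simp only [LinearMap.neg_apply, inner_neg_left, neg_mul]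
        linarith) x hx y hy
    simp only [LinearMap.neg_apply, inner_neg_left, neg_mul] at this
    linarith
  · exact osl_upper_aux n g Ω hΩ f Df hdf G γhi
      (fun z hz v => (hbound z hz v).2) x hx y hy
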